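/- Let F be a field, V an infinite-dimensional F-vector space, V* its dual, V̄ = V ⊕ V*, q the quadratic form on V̄ given by q(a,α) = α(a), and f_q((a,α),(b,β)) = α(b) + β(a) its polar form. Let u, v ∈ V̄ be nonzero q-singular vectors with f_q(u,v) ≠ 0 (so [u] and [v] are opposite points of the quadric S_q). If w ∈ V̄ is a nonzero q-singular vector such that f_q(w,z) = 0 for every q-singular vector z satisfying f_q(z,u) = 0 and f_q(z,v) = 0, then w ∈ span{u} or w ∈ span{v}. (Hence the hyperbolic line {[u],[v]}^{⊥⊥} of S_q has exactly two points.) -/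

import Mathlib

/-- The quadratic form `q(a,α) = α(a)` on `V̄ = V ⊕ V*`. -/
def quadForm {F V : Type*} [Field F] [AddCommGroup V] [Module F V]
    (p : V × Module.Dual F V) : F :=
  p.2 p.1

/-- The polar form `f_q((a,α),(b,β)) = α(b) + β(a)` of `q`. -/
def polarForm {F V : Type*} [Field F] [AddCommGroup V] [Module F V]
    (p q : V × Module.Dual F V) : F :=
  p.2 q.1 + q.2 p.1

lemma exists_dual_sep {F V : Type*} [Field F] [AddCommGroup V] [Module F V]
    (S : Set V) (x : V) (hx : x ∉ Submodule.span F S) :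
    ∃ δ : Module.Dual F V, δ x = 1 ∧ ∀ y ∈ S, δ y = 0 := by
  rw [← Subspace.forall_mem_dualAnnihilator_apply_eq_zero_iff] at hx
  push_neg at hx
  obtain ⟨φ, hφ, hφx⟩ := hx
  refine ⟨(φ x)⁻¹ • φ, ?_, fun y hy => ?_⟩
  · simp [inv_mul_cancel₀ hφx]
  · have := (Submodule.mem_dualAnnihilator φ).mp hφ y (Submodule.subset_span hy)
    simp [this]

lemma key {F V : Type*} [Field F] [AddCommGroup V] [Module F V]
    (u v : V × Module.Dual F V)
    (hu : quadForm u = 0) (hv : quadForm v = 0)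
    (huv : polarForm u v ≠ 0) (hn : v.2 u.1 ≠ 0)
    (w : V × Module.Dual F V) (hwq : quadForm w = 0)
    (hperp : ∀ z : V × Module.Dual F V, quadForm z = 0 →
      polarForm z u = 0 → polarForm z v = 0 → polarForm w z = 0) :
    w ∈ Submodule.span F ({u} : Set (V × Module.Dual F V)) ∨
      w ∈ Submodule.span F ({v} : Set (V × Module.Dual F V)) := by
  obtain ⟨A, α⟩ := u
  obtain ⟨B, β⟩ := v
  obtain ⟨C, γ⟩ := w
  simp only [quadForm, polarForm] at hu hv huv hwq hn
  -- hu : α A = 0, hv : β B = 0, hwq : γ C = 0, huv : α B + β A ≠ 0, hn : β A ≠ 0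
  have hp : ∀ (d : V) (δ : Module.Dual F V), δ d = 0 → δ A + α d = 0 → δ B + β d = 0 →
      γ d + δ C = 0 := by
    intro d δ h1 h2 h3
    have := hperp (d, δ) (by simpa [quadForm] using h1)
      (by simpa [polarForm] using h2) (by simpa [polarForm] using h3)
    simpa [polarForm] using this
  set e : F := α B + β A with he
  set t : F := (γ A + α C) / e with ht
  set s : F := (γ B + β C) / e with hs
  set c' : V := C - s • A - t • B with hc'
  set γ' : Module.Dual F V := γ - s • α - t • β with hγ'
  have hz1 : γ' A + α c' = 0 := by
    have h : γ' A + α c' = (γ A + α C) - t * e := by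
      simp only [hγ', hc', he, LinearMap.sub_apply, LinearMap.smul_apply, map_sub, map_smul,
        smul_eq_mul, hu]
      ring
    rw [h, ht, div_mul_cancel₀ _ huv, sub_self]
  have hz2 : γ' B + β c' = 0 := by
    have h : γ' B + β c' = (γ B + β C) - s * e := by
      simp only [hγ', hc', he, LinearMap.sub_apply, LinearMap.smul_apply, map_sub, map_smul,
        smul_eq_mul, hv]
      ring
    rw [h, hs, div_mul_cancel₀ _ huv, sub_self]
  have hp2 : ∀ (d : V) (δ : Module.Dual F V), δ d = 0 → δ A + α d = 0 → δ B + β d = 0 →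
      γ' d + δ c' = 0 := by
    intro d δ h1 h2 h3
    have h0 := hp d δ h1 h2 h3
    have h : γ' d + δ c' = (γ d + δ C) - s * (δ A + α d) - t * (δ B + β d) := by
      simp only [hγ', hc', LinearMap.sub_apply, LinearMap.smul_apply, map_sub, map_smul,
        smul_eq_mul]
      ring
    rw [h, h0, h2, h3]
    ring
  -- c' lies in span {A, B}
  have hcs : c' ∈ Submodule.span F ({A, B} : Set V) := by
    by_contra h
    obtain ⟨δ, hδc, hδ0⟩ := exists_dual_sep {A, B} c' h
    have hA0 : δ A = 0 := hδ0 A (by simp)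
    have hB0 : δ B = 0 := hδ0 B (by simp)
    have := hp2 0 δ (by simp) (by simp [hA0]) (by simp [hB0])
    simp [hδc] at this
  obtain ⟨p, r, hpr⟩ := Submodule.mem_span_pair.mp hcs
  -- in all cases c' = 0
  have hc0 : c' = 0 := by
    by_cases hB0 : B = 0
    · -- from hz2 : β c' = 0
      have hβc : β c' = 0 := by
        have hb : γ' B = 0 := by rw [hB0, map_zero]
        linear_combination hz2 - hb
      have : p * β A = 0 := by
        rw [← hpr] at hβc
        simpa [map_add, map_smul, smul_eq_mul, hB0] using hβc
      have hp0 : p = 0 := by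
        rcases mul_eq_zero.mp this with h | h
        · exact h
        · exact absurd h hn
      rw [← hpr, hp0, hB0]
      simp
    · -- A, B independent
      have hBA : A ∉ Submodule.span F ({B} : Set V) := by
        intro h
        obtain ⟨x, hx⟩ := Submodule.mem_span_singleton.mp h
        apply hn
        rw [← hx, map_smul, smul_eq_mul, hv, mul_zero]
      have hAB : B ∉ Submodule.span F ({A} : Set V) := by
        intro h
        obtain ⟨x, hx⟩ := Submodule.mem_span_singleton.mp h
        have : β B = x * β A := by rw [← hx, map_smul, smul_eq_mul]
        rw [hv] at this
        have hx0 : x = 0 := by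
          rcases mul_eq_zero.mp this.symm with h' | h'
          · exact h'
          · exact absurd h' hn
        apply hB0
        rw [← hx, hx0, zero_smul]
      obtain ⟨δ₁, h1b, h1a'⟩ := exists_dual_sep {A} B hAB
      have h1a : δ₁ A = 0 := h1a' A rfl
      obtain ⟨δ₂, h2a, h2b'⟩ := exists_dual_sep {B} A hBA
      have h2b : δ₂ B = 0 := h2b' B rfl
      -- T1 with (A, -(β A) • δ₁)
      have T1 := hp2 A (-(β A) • δ₁) (by simp [h1a]) (by simp [h1a, hu])
        (by simp [h1b])
      have hγ'A : γ' A = r * β A := by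
        rw [← hpr] at T1
        simp only [LinearMap.smul_apply, map_add, map_smul, smul_eq_mul, h1a, h1b] at T1
        linear_combination T1
      have hr : r = 0 := by
        have hαc : α c' = r * α B := by
          rw [← hpr]
          simp [map_add, map_smul, smul_eq_mul, hu]
        have : r * e = 0 := by
          rw [he]
          have := hz1
          rw [hγ'A, hαc] at this
          linear_combination this
        rcases mul_eq_zero.mp this with h | h
        · exact h
        · exact absurd h huv
      -- T2 with (B, -(α B) • δ₂)
      have T2 := hp2 B (-(α B) • δ₂) (by simp [h2b]) (by simp [h2a])
        (by simp [h2b, hv])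
      have hγ'B : γ' B = p * α B := by
        rw [← hpr] at T2
        simp only [LinearMap.smul_apply, map_add, map_smul, smul_eq_mul, h2a, h2b] at T2
        linear_combination T2
      have hps : p = 0 := by
        have hβc : β c' = p * β A := by
          rw [← hpr]
          simp [map_add, map_smul, smul_eq_mul, hv]
        have : p * e = 0 := by
          rw [he]
          have := hz2
          rw [hγ'B, hβc] at this
          linear_combination this
        rcases mul_eq_zero.mp this with h | h
        · exact h
        · exact absurd h huv
      rw [← hpr, hr, hps]
      simp
  have hγ'A : γ' A = 0 := by
    have := hz1
    rw [hc0, map_zero, add_zero] at this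
    exact this
  have hγ'B : γ' B = 0 := by
    have := hz2
    rw [hc0, map_zero, add_zero] at this
    exact this
  -- γ' = 0
  have hγ0 : γ' = 0 := by
    ext d
    simp only [LinearMap.zero_apply]
    -- reduce to the case β d = 0 in the degenerate situation B = 0
    by_cases hd : d ∈ Submodule.span F ({A, B} : Set V)
    · obtain ⟨x, y, hxy⟩ := Submodule.mem_span_pair.mp hd
      rw [← hxy, map_add, map_smul, map_smul, smul_eq_mul, smul_eq_mul, hγ'A, hγ'B]
      ring
    · by_cases hB0 : B = 0
      · -- B = 0 : need β d = 0 to build a test vector; split d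
        set k : F := β d / β A with hk
        set d₀ : V := d - k • A with hd₀
        have hβd₀ : β d₀ = 0 := by
          rw [hd₀, map_sub, map_smul, smul_eq_mul, hk, div_mul_cancel₀ _ hn, sub_self]
        have hγd₀ : γ' d₀ = 0 := by
          by_cases hmem : d₀ ∈ Submodule.span F ({A} : Set V)
          · obtain ⟨x, hx⟩ := Submodule.mem_span_singleton.mp hmem
            have : x * β A = 0 := by rw [← hx, map_smul, smul_eq_mul] at hβd₀; exact hβd₀
            have hx0 : x = 0 := by
              rcases mul_eq_zero.mp this with h | h
              · exact h
              · exact absurd h hn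
            rw [← hx, hx0, zero_smul, map_zero]
          · have hA3 : A ∉ Submodule.span F ({d₀} : Set V) := by
              intro h
              obtain ⟨x, hx⟩ := Submodule.mem_span_singleton.mp h
              apply hn
              rw [← hx, map_smul, smul_eq_mul, hβd₀, mul_zero]
            obtain ⟨δA, hδA1, hδA0'⟩ := exists_dual_sep {d₀} A hA3
            have hδA0 : δA d₀ = 0 := hδA0' d₀ rfl
            have := hp2 d₀ (-(α d₀) • δA) (by simp [hδA0]) (by simp [hδA1])
              (by simp [hB0, hβd₀])
            rw [hc0, map_zero, add_zero] at this
            exact this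
        have : γ' d = γ' d₀ + k * γ' A := by
          rw [hd₀, map_sub, map_smul, smul_eq_mul]
          ring
        rw [this, hγd₀, hγ'A]
        ring
      · -- B ≠ 0 : A, B, d independent enough
        have hBA : A ∉ Submodule.span F ({B} : Set V) := by
          intro h
          obtain ⟨x, hx⟩ := Submodule.mem_span_singleton.mp h
          apply hn
          rw [← hx, map_smul, smul_eq_mul, hv, mul_zero]
        have hA3 : A ∉ Submodule.span F ({B, d} : Set V) := by
          intro h
          obtain ⟨x, y, hxy⟩ := Submodule.mem_span_pair.mp h
          by_cases hy : y = 0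
          · apply hBA
            exact Submodule.mem_span_singleton.mpr ⟨x, by rw [← hxy, hy, zero_smul, add_zero]⟩
          · apply hd
            have : d = y⁻¹ • (A - x • B) := by
              rw [← hxy]
              match_scalars <;> field_simp <;> ring
            rw [this]
            apply Submodule.smul_mem
            apply Submodule.sub_mem
            · exact Submodule.subset_span (by simp)
            · exact Submodule.smul_mem _ _ (Submodule.subset_span (by simp))
        have hAB : B ∉ Submodule.span F ({A} : Set V) := by
          intro h
          obtain ⟨x, hx⟩ := Submodule.mem_span_singleton.mp h
          have : β B = x * β A := by rw [← hx, map_smul, smul_eq_mul]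
          rw [hv] at this
          have hx0 : x = 0 := by
            rcases mul_eq_zero.mp this.symm with h' | h'
            · exact h'
            · exact absurd h' hn
          apply hB0
          rw [← hx, hx0, zero_smul]
        have hB3 : B ∉ Submodule.span F ({A, d} : Set V) := by
          intro h
          obtain ⟨x, y, hxy⟩ := Submodule.mem_span_pair.mp h
          by_cases hy : y = 0
          · apply hAB
            exact Submodule.mem_span_singleton.mpr ⟨x, by rw [← hxy, hy, zero_smul, add_zero]⟩
          · apply hd
            have : d = y⁻¹ • (B - x • A) := by
              rw [← hxy]
              match_scalars <;> field_simp <;> ring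
            rw [this]
            apply Submodule.smul_mem
            apply Submodule.sub_mem
            · exact Submodule.subset_span (by simp)
            · exact Submodule.smul_mem _ _ (Submodule.subset_span (by simp))
        obtain ⟨δA, hδA1, hδA0⟩ := exists_dual_sep {B, d} A hA3
        obtain ⟨δB, hδB1, hδB0⟩ := exists_dual_sep {A, d} B hB3
        have hδAB : δA B = 0 := hδA0 B (by simp)
        have hδAd : δA d = 0 := hδA0 d (by simp)
        have hδBA : δB A = 0 := hδB0 A (by simp)
        have hδBd : δB d = 0 := hδB0 d (by simp)
        have := hp2 d (-(α d) • δA - (β d) • δB)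
          (by simp [hδAd, hδBd])
          (by simp [hδA1, hδBA])
          (by simp [hδAB, hδB1])
        rw [hc0, map_zero, add_zero] at this
        exact this
  -- now w = s • u + t • v
  have hC : C = s • A + t • B := by
    have : c' = 0 := hc0
    rw [hc'] at this
    rw [← sub_eq_zero]
    rw [← this]
    abel
  have hγ : γ = s • α + t • β := by
    have : γ' = 0 := hγ0
    rw [hγ'] at this
    rw [← sub_eq_zero]
    rw [← this]
    abel
  -- q(w) = s * t * e = 0
  have hst : s * t = 0 := by
    have : γ C = s * t * e := by
      rw [hγ, hC, he]
      simp only [LinearMap.add_apply, LinearMap.smul_apply, map_add, map_smul, smul_eq_mul,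
        hu, hv]
      ring
    rw [hwq] at this
    rcases mul_eq_zero.mp this.symm with h | h
    · exact h
    · exact absurd h huv
  rcases mul_eq_zero.mp hst with h | h
  · right
    apply Submodule.mem_span_singleton.mpr
    exact ⟨t, by rw [Prod.smul_mk, Prod.mk.injEq]; constructor <;> simp [hC, hγ, h]⟩
  · left
    apply Submodule.mem_span_singleton.mpr
    exact ⟨s, by rw [Prod.smul_mk, Prod.mk.injEq]; constructor <;> simp [hC, hγ, h]⟩

/-- The hyperbolic lines of the quadric `S_q` have size 2: if `[u]` and `[v]` are
opposite points of `S_q` and `[w]` is a point of `S_q` collinear with every point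
of `{[u],[v]}^⊥`, then `[w] = [u]` or `[w] = [v]`. -/
theorem stmt_12 {F V : Type*} [Field F] [AddCommGroup V] [Module F V]
    (hV : ¬ Module.Finite F V)
    (u v : V × Module.Dual F V) (hu0 : u ≠ 0) (hv0 : v ≠ 0)
    (hu : quadForm u = 0) (hv : quadForm v = 0)
    (huv : polarForm u v ≠ 0)
    (w : V × Module.Dual F V) (hw0 : w ≠ 0) (hwq : quadForm w = 0)
    (hperp : ∀ z : V × Module.Dual F V, quadForm z = 0 →
      polarForm z u = 0 → polarForm z v = 0 → polarForm w z = 0) :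
    w ∈ Submodule.span F ({u} : Set (V × Module.Dual F V)) ∨
      w ∈ Submodule.span F ({v} : Set (V × Module.Dual F V)) := by
  have h : u.2 v.1 ≠ 0 ∨ v.2 u.1 ≠ 0 := by
    by_contra hcon
    push_neg at hcon
    apply huv
    simp [polarForm, hcon.1, hcon.2]
  rcases h with h | h
  · have hvu : polarForm v u ≠ 0 := by
      simp only [polarForm] at huv ⊢
      rwa [add_comm]
    exact (key v u hv hu hvu h w hwq
      (fun z hz h1 h2 => hperp z hz h2 h1)).symm
  · exact key u v hu hv huv h w hwq hperp
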